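/- Let 𝔤 be an n-dimensional Lie algebra over a field K of characteristic zero which admits a pre-Lie algebra structure. Then 𝔤 admits a faithful linear representation of degree n+1, i.e., an injective Lie algebra homomorphism φ: 𝔤 → 𝔤𝔩ₙ₊₁(K). -/

import Mathlib

/-- A bilinear product `x · y` on a Lie algebra `𝔤` is a pre-Lie algebra structure if
`[x,y] = x·y − y·x` and `[x,y]·z = x·(y·z) − y·(x·z)`. -/
def IsPreLieStructure {K L : Type*} [Field K] [LieRing L] [LieAlgebra K L]
    (mul : L →ₗ[K] L →ₗ[K] L) : Prop :=
  (∀ x y : L, ⁅x, y⁆ = mul x y - mul y x) ∧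
  (∀ x y z : L, mul ⁅x, y⁆ z = mul x (mul y z) - mul y (mul x z))

/-- The affine representation of a pre-Lie algebra on `L × K`. -/
def preLieRho {K L : Type*} [Field K] [LieRing L] [LieAlgebra K L]
    (mul : L →ₗ[K] L →ₗ[K] L) : L →ₗ[K] Module.End K (L × K) where
  toFun x :=
    { toFun := fun p => (mul x p.1 + p.2 • x, 0)
      map_add' := fun p q => by
        simp only [Prod.fst_add, Prod.snd_add, map_add, add_smul, Prod.mk_add_mk, add_zero,
          Prod.mk.injEq, and_true]
        abel
      map_smul' := fun c p => by
        simp only [Prod.smul_fst, Prod.smul_snd, map_smul, RingHom.id_apply, Prod.smul_mk,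
          smul_add, smul_zero, smul_assoc] }
  map_add' x y := LinearMap.ext fun p => by
    simp only [map_add, LinearMap.add_apply, LinearMap.coe_mk, AddHom.coe_mk, smul_add,
      Prod.mk_add_mk, add_zero, Prod.mk.injEq, and_true]
    abel
  map_smul' c x := LinearMap.ext fun p => by
    simp only [map_smul, RingHom.id_apply, LinearMap.smul_apply, LinearMap.coe_mk, AddHom.coe_mk,
      Prod.smul_mk, smul_add, smul_zero, smul_comm p.2 c]

attribute [local instance 100] LieRing.ofAssociativeRing

/-- An `n`-dimensional Lie algebra over a field of characteristic zero admitting a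
pre-Lie algebra structure admits a faithful linear representation of degree `n + 1`. -/
theorem faithful_rep_of_preLie_structure
    (K : Type*) (L : Type*) [Field K] [CharZero K]
    [LieRing L] [LieAlgebra K L] [FiniteDimensional K L]
    (n : ℕ) (hn : Module.finrank K L = n)
    (h : ∃ mul : L →ₗ[K] L →ₗ[K] L, IsPreLieStructure mul) :
    ∃ φ : L →ₗ⁅K⁆ Matrix (Fin (n + 1)) (Fin (n + 1)) K, Function.Injective φ := by
  obtain ⟨mul, h1, h2⟩ := h
  set ρ := preLieRho mul with hρ
  have hlie : ∀ x y : L, ρ ⁅x, y⁆ = ⁅ρ x, ρ y⁆ := by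
    intro x y
    refine LinearMap.ext fun p => ?_
    simp only [hρ, preLieRho, Ring.lie_def, LinearMap.sub_apply, Module.End.mul_apply,
      LinearMap.coe_mk, AddHom.coe_mk]
    rw [h2 x y p.1, h1 x y]
    simp only [map_sub, map_add, map_smul, LinearMap.sub_apply, LinearMap.add_apply,
      smul_sub, smul_add, smul_zero, add_zero, zero_add, Prod.mk_sub_mk, sub_zero,
      Prod.mk.injEq, and_true, sub_self, zero_smul]
    abel
  have hinj : Function.Injective ρ := by
    intro x y hxy
    have := congrArg (fun f : Module.End K (L × K) => (f ((0 : L), (1 : K))).1) hxy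
    simpa [hρ, preLieRho] using this
  have hrank : Module.finrank K (L × K) = n + 1 := by
    simp [Module.finrank_prod, hn]
  let b : Module.Basis (Fin (n + 1)) K (L × K) :=
    (Module.finBasis K (L × K)).reindex (finCongr hrank)
  let e : Module.End K (L × K) ≃ₐ[K] Matrix (Fin (n + 1)) (Fin (n + 1)) K :=
    LinearMap.toMatrixAlgEquiv b
  refine ⟨{ toLinearMap := e.toLinearMap.comp ρ, map_lie' := ?_ }, ?_⟩
  · intro x y
    show e (ρ ⁅x, y⁆) = ⁅e (ρ x), e (ρ y)⁆
    rw [hlie x y, Ring.lie_def, Ring.lie_def, map_sub, map_mul, map_mul]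
  · intro x y hxy
    apply hinj
    apply e.injective
    exact hxy
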